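/- There exists a constant C > 0, depending only on R, such that the Christoffel symbols Γ^a_{bc} of the Cartesian Schwarzschild metric G satisfy |Γ^a_{bc}(x₀,x)| ≤ C/|x|² for all indices a,b,c ∈ {0,1,2,3} and all points (x₀,x) with |x| ≥ 2R. (Since the Christoffel symbols of the flat Minkowski metric vanish in Cartesian coordinates, this says that the perturbation of the Christoffel symbols due to R is O(r⁻²).) -/

import Mathlib

noncomputable section

/-- Partial derivative of `f` in the `i`-th coordinate direction at `p`. -/
def coordPDeriv {n : ℕ} (f : (Fin n → ℝ) → ℝ) (i : Fin n) (p : Fin n → ℝ) : ℝ :=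
  fderiv ℝ f p (Pi.single i 1)

/-- Christoffel symbols `Γ^k_{ij}` of a metric `g` given in coordinates on (an open
subset of) `ℝⁿ`: `Γ^k_{ij} = (1/2) Σ_l g^{kl} (∂_i g_{jl} + ∂_j g_{il} − ∂_l g_{ij})`. -/
def christoffel {n : ℕ} (g : (Fin n → ℝ) → Matrix (Fin n) (Fin n) ℝ)
    (k i j : Fin n) (p : Fin n → ℝ) : ℝ :=
  (1 / 2) * ∑ l, (g p)⁻¹ k l *
    (coordPDeriv (fun q => g q j l) i p + coordPDeriv (fun q => g q i l) j p
      - coordPDeriv (fun q => g q i j) l p)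

/-- The Euclidean norm `|x|` of the spatial part of a point `(x₀, x₁, x₂, x₃) ∈ ℝ⁴`. -/
def spatialNorm (p : Fin 4 → ℝ) : ℝ :=
  Real.sqrt ((p 1) ^ 2 + (p 2) ^ 2 + (p 3) ^ 2)

/-- The Schwarzschild metric in Cartesian coordinates `(x₀, x₁, x₂, x₃)`:
`G_{00} = 1 − R/|x|`, `G_{0i} = G_{i0} = 0`, and
`G_{ij} = −δ_{ij} − R·x_i·x_j/(|x|²·(|x| − R))` for spatial indices `i, j`. -/
def cartMetric (R : ℝ) (p : Fin 4 → ℝ) : Matrix (Fin 4) (Fin 4) ℝ :=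
  Matrix.of fun a b =>
    if a = 0 then (if b = 0 then 1 - R / spatialNorm p else 0)
    else if b = 0 then 0
    else -(if a = b then (1 : ℝ) else 0)
      - R * p a * p b / ((spatialNorm p) ^ 2 * (spatialNorm p - R))

open ContinuousLinearMap in
def sder (p : Fin 4 → ℝ) : (Fin 4 → ℝ) →L[ℝ] ℝ :=
  (spatialNorm p)⁻¹ • ((p 1) • (proj 1 : (Fin 4 → ℝ) →L[ℝ] ℝ) + (p 2) • proj 2 + (p 3) • proj 3)
open ContinuousLinearMap in
lemma hasFDerivAt_spatialNorm (p : Fin 4 → ℝ) (hp : 0 < spatialNorm p) :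
    HasFDerivAt spatialNorm (sder p) p := by
  have hn : (p 1)^2 + (p 2)^2 + (p 3)^2 ≠ 0 := by
    intro h
    rw [spatialNorm, h, Real.sqrt_zero] at hp
    exact lt_irrefl 0 hp
  have h1 : HasFDerivAt (fun q : Fin 4 → ℝ => (q 1)^2 + (q 2)^2 + (q 3)^2)
      ((2 * p 1) • (proj 1 : (Fin 4 → ℝ) →L[ℝ] ℝ) + (2 * p 2) • proj 2 + (2 * p 3) • proj 3) p := by
    have e1 : HasFDerivAt (fun q : Fin 4 → ℝ => q 1) (proj 1 : (Fin 4 → ℝ) →L[ℝ] ℝ) p :=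
      (proj 1 : (Fin 4 → ℝ) →L[ℝ] ℝ).hasFDerivAt
    have e2 : HasFDerivAt (fun q : Fin 4 → ℝ => q 2) (proj 2 : (Fin 4 → ℝ) →L[ℝ] ℝ) p :=
      (proj 2 : (Fin 4 → ℝ) →L[ℝ] ℝ).hasFDerivAt
    have e3 : HasFDerivAt (fun q : Fin 4 → ℝ => q 3) (proj 3 : (Fin 4 → ℝ) →L[ℝ] ℝ) p :=
      (proj 3 : (Fin 4 → ℝ) →L[ℝ] ℝ).hasFDerivAt
    have := ((e1.mul e1).add (e2.mul e2)).add (e3.mul e3)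
    simp only [pow_two]
    refine this.congr_fderiv ?_
    module
  have h2 := (Real.hasDerivAt_sqrt hn).comp_hasFDerivAt p h1
  refine h2.congr_fderiv (Eq.symm ?_)
  rw [show Real.sqrt ((p 1)^2 + (p 2)^2 + (p 3)^2) = spatialNorm p from rfl]
  ext v
  simp [sder, ContinuousLinearMap.smul_apply]
  field_simp
lemma sder_apply (p : Fin 4 → ℝ) (i : Fin 4) :
    sder p (Pi.single i 1) = (if i = 0 then 0 else p i) / spatialNorm p := by
  fin_cases i <;>
    simp [sder, ContinuousLinearMap.smul_apply, Pi.single_apply, div_eq_inv_mul] <;> norm_num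
lemma abs_coord_le (p : Fin 4 → ℝ) (i : Fin 4) (hi : i ≠ 0) : |p i| ≤ spatialNorm p := by
  have : (p i)^2 ≤ (p 1)^2 + (p 2)^2 + (p 3)^2 := by
    fin_cases i <;> simp_all <;> nlinarith [sq_nonneg (p 1), sq_nonneg (p 2), sq_nonneg (p 3)]
  calc |p i| = Real.sqrt ((p i)^2) := (Real.sqrt_sq_eq_abs _).symm
    _ ≤ spatialNorm p := Real.sqrt_le_sqrt this
open ContinuousLinearMap in
lemma pderiv_bound (R : ℝ) (hR : 0 < R) (p : Fin 4 → ℝ) (hp : 2 * R ≤ spatialNorm p)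
    (a b i : Fin 4) :
    |coordPDeriv (fun q => cartMetric R q a b) i p| ≤ 16 * R / (spatialNorm p) ^ 2 := by
  set s := spatialNorm p with hsdef
  have hs0 : 0 < s := lt_of_lt_of_le (by linarith) hp
  have hsR : R < s := by linarith
  have hsne : s ≠ 0 := hs0.ne'
  have hhalf : s / 2 ≤ s - R := by linarith
  have hd : |sder p (Pi.single i 1)| ≤ 1 := by
    rw [sder_apply]
    rcases eq_or_ne i 0 with h | h
    · simp [h]
    · rw [if_neg h, abs_div, abs_of_pos hs0, div_le_one hs0]
      exact abs_coord_le p i h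
  have hRpos : (0:ℝ) ≤ 16 * R / s ^ 2 := by positivity
  by_cases ha : a = 0
  · by_cases hb : b = 0
    · -- g00
      have hf : (fun q => cartMetric R q a b) = fun q => 1 - R * (spatialNorm q)⁻¹ := by
        funext q; simp [cartMetric, ha, hb, div_eq_mul_inv]
      have h1 : HasDerivAt (fun t : ℝ => 1 - R * t⁻¹) (-(R * (-(s^2)⁻¹))) s :=
        ((hasDerivAt_inv hsne).const_mul R).const_sub 1
      have H : HasFDerivAt (fun q => cartMetric R q a b)
          ((-(R * (-(s^2)⁻¹))) • sder p) p := by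
        rw [hf]
        have := h1.comp_hasFDerivAt p (hasFDerivAt_spatialNorm p hs0); exact this
      rw [coordPDeriv, H.fderiv, ContinuousLinearMap.smul_apply, smul_eq_mul]
      rw [show -(R * (-(s^2)⁻¹)) = R * (s^2)⁻¹ by ring]
      calc |R * (s^2)⁻¹ * sder p (Pi.single i 1)|
          = R * (s^2)⁻¹ * |sder p (Pi.single i 1)| := by
            rw [abs_mul, abs_of_pos (by positivity : (0:ℝ) < R * (s^2)⁻¹)]
        _ ≤ R * (s^2)⁻¹ * 1 := by gcongr
        _ ≤ 16 * R / s^2 := by rw [mul_one, div_eq_mul_inv]; gcongr; linarith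
    · have hf : (fun q => cartMetric R q a b) = fun _ => (0:ℝ) := by
        funext q; simp [cartMetric, ha, hb]
      rw [coordPDeriv, hf, fderiv_fun_const]
      simpa using hRpos
  · by_cases hb : b = 0
    · have hf : (fun q => cartMetric R q a b) = fun _ => (0:ℝ) := by
        funext q; simp [cartMetric, ha, hb]
      rw [coordPDeriv, hf, fderiv_fun_const]
      simpa using hRpos
    · -- spatial case
      have hf : (fun q => cartMetric R q a b) =
          fun q => -(if a = b then (1:ℝ) else 0)
            - R * q a * q b * ((spatialNorm q) ^ 2 * (spatialNorm q - R))⁻¹ := by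
        funext q; simp [cartMetric, ha, hb, div_eq_mul_inv]
      have hxpos : 0 < s ^ 2 * (s - R) := mul_pos (pow_pos hs0 2) (by linarith)
      have hx : s ^ 2 * (s - R) ≠ 0 := hxpos.ne'
      have hqa : HasFDerivAt (fun q : Fin 4 → ℝ => q a) (proj a : (Fin 4 → ℝ) →L[ℝ] ℝ) p :=
        (proj a : (Fin 4 → ℝ) →L[ℝ] ℝ).hasFDerivAt
      have hqb : HasFDerivAt (fun q : Fin 4 → ℝ => q b) (proj b : (Fin 4 → ℝ) →L[ℝ] ℝ) p :=
        (proj b : (Fin 4 → ℝ) →L[ℝ] ℝ).hasFDerivAt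
      have hu : HasFDerivAt (fun q : Fin 4 → ℝ => R * q a * q b)
          ((R * p a) • (proj b : (Fin 4 → ℝ) →L[ℝ] ℝ) + p b • (R • (proj a : (Fin 4 → ℝ) →L[ℝ] ℝ))) p :=
        (hqa.const_mul R).mul hqb
      have hφ : HasDerivAt (fun t : ℝ => (t ^ 2 * (t - R))⁻¹)
          (-(2 * s * (s - R) + s ^ 2) / (s ^ 2 * (s - R)) ^ 2) s := by
        have h := ((hasDerivAt_pow 2 s).mul ((hasDerivAt_id s).sub_const R)).inv hx
        refine h.congr_deriv ?_
        simp only [id_eq, pow_one, Nat.cast_ofNat, mul_one, Pi.mul_apply]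
        ring
      set w' := -(2 * s * (s - R) + s ^ 2) / (s ^ 2 * (s - R)) ^ 2 with hw'def
      have hw : HasFDerivAt (fun q => ((spatialNorm q) ^ 2 * (spatialNorm q - R))⁻¹)
          (w' • sder p) p :=
        by have := hφ.comp_hasFDerivAt p (hasFDerivAt_spatialNorm p hs0); exact this
      have hprod : HasFDerivAt (fun q => -(if a = b then (1:ℝ) else 0)
            - R * q a * q b * ((spatialNorm q) ^ 2 * (spatialNorm q - R))⁻¹) _ p := (hu.mul hw).const_sub (-(if a = b then (1:ℝ) else 0))
      rw [hf, coordPDeriv, hprod.fderiv]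
      rw [← hsdef]
      simp only [ContinuousLinearMap.neg_apply, ContinuousLinearMap.add_apply,
        ContinuousLinearMap.smul_apply, ContinuousLinearMap.proj_apply, smul_eq_mul,
        Pi.single_apply, abs_neg]
      -- bounds
      have hw'b : |w'| ≤ 12 / s ^ 4 := by
        rw [hw'def, abs_div, abs_neg, abs_of_nonneg (by nlinarith : (0:ℝ) ≤ 2*s*(s-R)+s^2),
          abs_of_pos (by positivity : (0:ℝ) < (s^2*(s-R))^2),
          div_le_div_iff₀ (by positivity) (by positivity)]
        nlinarith [mul_nonneg (mul_nonneg (pow_pos hs0 4).le (by linarith : (0:ℝ) ≤ s - R - s/2)) (by linarith : (0:ℝ) ≤ s - R),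
          mul_nonneg (pow_pos hs0 5).le (by linarith : (0:ℝ) ≤ s - R - s/2),
          (pow_pos hs0 6).le]
      have hWb : (s ^ 2 * (s - R))⁻¹ ≤ 2 / s ^ 3 := by
        rw [inv_eq_one_div, div_le_div_iff₀ hxpos (by positivity)]
        nlinarith [mul_nonneg (sq_nonneg s) (by linarith : (0:ℝ) ≤ s - R - s/2)]
      have hpa : |p a| ≤ s := abs_coord_le p a ha
      have hpb : |p b| ≤ s := abs_coord_le p b hb
      have hib : |(if b = i then (1:ℝ) else 0)| ≤ 1 := by split <;> norm_num
      have hia : |(if a = i then (1:ℝ) else 0)| ≤ 1 := by split <;> norm_num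
      have ht1 : |R * p a * p b * (w' * sder p (Pi.single i 1))| ≤ 12 * R / s ^ 2 := by
        calc |R * p a * p b * (w' * sder p (Pi.single i 1))|
            = |R| * |p a| * |p b| * (|w'| * |sder p (Pi.single i 1)|) := by
              rw [abs_mul, abs_mul, abs_mul, abs_mul]
          _ ≤ R * s * s * ((12 / s^4) * 1) := by
              rw [abs_of_pos hR]; gcongr
          _ = 12 * R / s ^ 2 := by field_simp
      have ht2 : |(s ^ 2 * (s - R))⁻¹ * (R * p a * (if b = i then (1:ℝ) else 0)
            + p b * (R * (if a = i then (1:ℝ) else 0)))| ≤ 4 * R / s ^ 2 := by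
        calc |(s ^ 2 * (s - R))⁻¹ * (R * p a * (if b = i then (1:ℝ) else 0)
              + p b * (R * (if a = i then (1:ℝ) else 0)))|
            ≤ |(s ^ 2 * (s - R))⁻¹| * (|R| * |p a| * |(if b = i then (1:ℝ) else 0)|
              + |p b| * (|R| * |(if a = i then (1:ℝ) else 0)|)) := by
              rw [abs_mul]
              gcongr
              refine (abs_add_le _ _).trans ?_
              rw [abs_mul, abs_mul, abs_mul, abs_mul]
          _ ≤ (2 / s^3) * (R * s * 1 + s * (R * 1)) := by
              rw [abs_of_pos (by positivity : (0:ℝ) < (s^2*(s-R))⁻¹), abs_of_pos hR]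
              gcongr
          _ = 4 * R / s ^ 2 := by field_simp; ring
      calc |R * p a * p b * (w' * sder p (Pi.single i 1))
            + (s ^ 2 * (s - R))⁻¹ * (R * p a * (if b = i then (1:ℝ) else 0)
              + p b * (R * (if a = i then (1:ℝ) else 0)))|
          ≤ |R * p a * p b * (w' * sder p (Pi.single i 1))|
            + |(s ^ 2 * (s - R))⁻¹ * (R * p a * (if b = i then (1:ℝ) else 0)
              + p b * (R * (if a = i then (1:ℝ) else 0)))| := abs_add_le _ _
        _ ≤ 12 * R / s ^ 2 + 4 * R / s ^ 2 := add_le_add ht1 ht2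
        _ = 16 * R / s ^ 2 := by ring
lemma diag_id (R s t x y z : ℝ) (hs : s ≠ 0) (ht : t ≠ 0) (hts : s - R = t)
    (h2 : s^2 = x^2+y^2+z^2) :
    (-1 - R*x*x/(s^2*t)) * (-1 + R*x*x/s^3)
      + -(R*x*y/(s^2*t) * (R*y*x/s^3)) + -(R*x*z/(s^2*t) * (R*z*x/s^3)) = 1 := by
  field_simp
  linear_combination (R^2 * x * x) * h2 + (R * x * x * s^2) * hts
lemma off_id (R s t x y z : ℝ) (hs : s ≠ 0) (ht : t ≠ 0) (hts : s - R = t)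
    (h2 : s^2 = x^2+y^2+z^2) :
    (-1 - R*x*x/(s^2*t)) * (R*x*y/s^3)
      + -(R*x*y/(s^2*t) * (-1 + R*y*y/s^3)) + -(R*x*z/(s^2*t) * (R*z*y/s^3)) = 0 := by
  field_simp
  linear_combination (R^2 * x * y) * h2 + (R * x * y * s^2) * hts
def cartMetricInv (R : ℝ) (p : Fin 4 → ℝ) : Matrix (Fin 4) (Fin 4) ℝ :=
  Matrix.of fun a b =>
    if a = 0 then (if b = 0 then (1 - R / spatialNorm p)⁻¹ else 0)
    else if b = 0 then 0
    else -(if a = b then (1 : ℝ) else 0)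
      + R * p a * p b / (spatialNorm p) ^ 3
set_option maxHeartbeats 1000000 in
lemma cartMetric_inv (R : ℝ) (hR : 0 < R) (p : Fin 4 → ℝ) (hp : 2 * R ≤ spatialNorm p) :
    (cartMetric R p)⁻¹ = cartMetricInv R p := by
  apply Matrix.inv_eq_right_inv
  have hsdef : Real.sqrt ((p 1) ^ 2 + (p 2) ^ 2 + (p 3) ^ 2) = spatialNorm p := rfl
  set s := spatialNorm p with hsdef2
  have hs0 : 0 < s := lt_of_lt_of_le (by linarith) hp
  have hsR : R < s := by linarith
  have hsne : s ≠ 0 := hs0.ne'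
  have hsRne : s - R ≠ 0 := by intro h; apply hsne; linarith [sub_eq_zero.mp h]
  have hs2 : s ^ 2 = (p 1) ^ 2 + (p 2) ^ 2 + (p 3) ^ 2 := by
    rw [← hsdef, Real.sq_sqrt (by positivity)]
  have hfrac : (1 : ℝ) - R / s ≠ 0 := by
    have : R / s < 1 := (div_lt_one hs0).mpr hsR
    linarith
  ext a b
  rw [Matrix.mul_apply, Fin.sum_univ_four]
  clear_value s
  clear hsdef
  have e2 : ∀ (h : 2 < 4), (⟨2, h⟩ : Fin 4) = (2 : Fin 4) := fun _ => rfl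
  have e3 : ∀ (h : 3 < 4), (⟨3, h⟩ : Fin 4) = (3 : Fin 4) := fun _ => rfl
  obtain ⟨t, ht⟩ : ∃ t, spatialNorm p - R = t := ⟨_, rfl⟩
  rw [← hsdef2] at ht
  have htne : t ≠ 0 := by rw [← ht]; exact hsRne
  fin_cases a <;> fin_cases b <;>
    simp only [cartMetric, cartMetricInv, Matrix.of_apply, ← hsdef2] <;>
    norm_num [Matrix.one_apply, Fin.ext_iff, e2, e3, (show ((0:Fin 4):ℕ) = 0 from rfl), (show ((1:Fin 4):ℕ) = 1 from rfl), (show ((2:Fin 4):ℕ) = 2 from rfl), (show ((3:Fin 4):ℕ) = 3 from rfl)] <;>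
    first
      | decide
      | omega
      | (intro h1 h2; first | exact absurd h2 h1 | exact absurd h1 h2)
      | (exact mul_inv_cancel₀ hfrac)
      | (rw [ht]
         first
            | linear_combination diag_id R s t (p 1) (p 2) (p 3) hsne htne ht (by linear_combination hs2)
            | linear_combination diag_id R s t (p 2) (p 1) (p 3) hsne htne ht (by linear_combination hs2)
            | linear_combination diag_id R s t (p 3) (p 1) (p 2) hsne htne ht (by linear_combination hs2)
            | linear_combination off_id R s t (p 1) (p 2) (p 3) hsne htne ht (by linear_combination hs2)
            | linear_combination off_id R s t (p 1) (p 3) (p 2) hsne htne ht (by linear_combination hs2)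
            | linear_combination off_id R s t (p 2) (p 1) (p 3) hsne htne ht (by linear_combination hs2)
            | linear_combination off_id R s t (p 2) (p 3) (p 1) hsne htne ht (by linear_combination hs2)
            | linear_combination off_id R s t (p 3) (p 1) (p 2) hsne htne ht (by linear_combination hs2)
            | linear_combination off_id R s t (p 3) (p 2) (p 1) hsne htne ht (by linear_combination hs2))
lemma inv_entry_bound (R : ℝ) (hR : 0 < R) (p : Fin 4 → ℝ) (hp : 2 * R ≤ spatialNorm p)
    (a l : Fin 4) : |cartMetricInv R p a l| ≤ 2 := by
  set s := spatialNorm p with hsdef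
  have hs0 : 0 < s := lt_of_lt_of_le (by linarith) hp
  have hRs : R / s ≤ 1 / 2 := by rw [div_le_div_iff₀ hs0 (by norm_num)]; linarith
  by_cases ha : a = 0
  · by_cases hl : l = 0
    · simp only [cartMetricInv, Matrix.of_apply, ha, hl, ite_true, eq_self_iff_true, ← hsdef]
      have h1 : (1:ℝ)/2 ≤ 1 - R / s := by linarith
      rw [abs_of_pos (inv_pos.mpr (by linarith : (0:ℝ) < 1 - R/s))]
      calc (1 - R/s)⁻¹ ≤ ((1:ℝ)/2)⁻¹ := by
            apply inv_anti₀ (by norm_num) h1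
        _ = 2 := by norm_num
    · simp [cartMetricInv, ha, hl]
  · by_cases hl : l = 0
    · simp [cartMetricInv, ha, hl]
    · simp only [cartMetricInv, Matrix.of_apply, if_neg ha, if_neg hl, ← hsdef]
      have hfrac : |R * p a * p l / s ^ 3| ≤ 1/2 := by
        rw [abs_div, abs_mul, abs_mul, abs_of_pos hR, abs_of_pos (by positivity : (0:ℝ) < s^3)]
        calc R * |p a| * |p l| / s^3 ≤ R * s * s / s^3 := by
              gcongr
              · exact abs_coord_le p a ha
              · exact abs_coord_le p l hl
          _ = R / s := by field_simp
          _ ≤ 1/2 := hRs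
      calc |(-(if a = l then (1:ℝ) else 0)) + R * p a * p l / s ^ 3|
          ≤ |(-(if a = l then (1:ℝ) else 0))| + |R * p a * p l / s ^ 3| := abs_add_le _ _
        _ ≤ 1 + 1/2 := by
            apply add_le_add _ hfrac
            rw [abs_neg]; split <;> norm_num
        _ ≤ 2 := by norm_num

/-- The Christoffel symbols of the Cartesian Schwarzschild metric are `O(|x|⁻²)`:
there is a constant `C > 0` (depending only on `R`) with
`|Γ^a_{bc}(x₀,x)| ≤ C/|x|²` whenever `|x| ≥ 2R`. -/
theorem cartesian_christoffel_bound (R : ℝ) (hR : 0 < R) :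
    ∃ C > (0 : ℝ), ∀ a b c : Fin 4, ∀ p : Fin 4 → ℝ, 2 * R ≤ spatialNorm p →
      |christoffel (cartMetric R) a b c p| ≤ C / (spatialNorm p) ^ 2 := by
  refine ⟨192 * R, by positivity, ?_⟩
  intro a b c p hp
  rw [christoffel, cartMetric_inv R hR p hp]
  have hterm : ∀ l : Fin 4, |cartMetricInv R p a l *
      (coordPDeriv (fun q => cartMetric R q c l) b p
        + coordPDeriv (fun q => cartMetric R q b l) c p
        - coordPDeriv (fun q => cartMetric R q b c) l p)| ≤ 96 * R / (spatialNorm p)^2 := by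
    intro l
    rw [abs_mul]
    calc |cartMetricInv R p a l| * |coordPDeriv (fun q => cartMetric R q c l) b p
          + coordPDeriv (fun q => cartMetric R q b l) c p
          - coordPDeriv (fun q => cartMetric R q b c) l p|
        ≤ 2 * (16 * R / (spatialNorm p)^2 + 16 * R / (spatialNorm p)^2 + 16 * R / (spatialNorm p)^2) := by
          apply mul_le_mul (inv_entry_bound R hR p hp a l) _ (abs_nonneg _) (by norm_num)
          calc |coordPDeriv (fun q => cartMetric R q c l) b p
                + coordPDeriv (fun q => cartMetric R q b l) c p
                - coordPDeriv (fun q => cartMetric R q b c) l p|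
              ≤ |coordPDeriv (fun q => cartMetric R q c l) b p
                + coordPDeriv (fun q => cartMetric R q b l) c p|
                + |coordPDeriv (fun q => cartMetric R q b c) l p| := abs_sub _ _
            _ ≤ (|coordPDeriv (fun q => cartMetric R q c l) b p|
                + |coordPDeriv (fun q => cartMetric R q b l) c p|)
                + |coordPDeriv (fun q => cartMetric R q b c) l p| := by
                  gcongr; exact abs_add_le _ _
            _ ≤ 16 * R / (spatialNorm p)^2 + 16 * R / (spatialNorm p)^2 + 16 * R / (spatialNorm p)^2 := by
                  gcongr <;> exact pderiv_bound R hR p hp _ _ _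
      _ = 96 * R / (spatialNorm p)^2 := by ring
  calc |1/2 * ∑ l, cartMetricInv R p a l *
        (coordPDeriv (fun q => cartMetric R q c l) b p
          + coordPDeriv (fun q => cartMetric R q b l) c p
          - coordPDeriv (fun q => cartMetric R q b c) l p)|
      = 1/2 * |∑ l, cartMetricInv R p a l *
        (coordPDeriv (fun q => cartMetric R q c l) b p
          + coordPDeriv (fun q => cartMetric R q b l) c p
          - coordPDeriv (fun q => cartMetric R q b c) l p)| := by
        rw [abs_mul]; norm_num
    _ ≤ 1/2 * ∑ l : Fin 4, 96 * R / (spatialNorm p)^2 := by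
        gcongr
        exact (Finset.abs_sum_le_sum_abs _ _).trans (Finset.sum_le_sum fun l _ => hterm l)
    _ = 192 * R / (spatialNorm p)^2 := by
        rw [Finset.sum_const]
        simp
        ring

end
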